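/- Let R be an integral domain, I a nonzero ideal of R, T = (I : I), and assume I is strongly stable, i.e. I = aT for some a ∈ I. Then I is a big ideal of R if and only if for every R-submodule W of T with W ⊊ T, one has W^n ⊊ T for every n ≥ 2 (where W^n denotes the R-submodule of T generated by all products of n elements of W). -/

import Mathlib

/-- An ideal `I` of a commutative ring `R` is a *big ideal* if whenever `J ⊊ I`,
`J ^ n ⊊ I ^ n` for every positive integer `n`. -/
def Ideal.IsBig {R : Type*} [CommRing R] (I : Ideal R) : Prop :=
  ∀ J : Ideal R, J < I → ∀ n : ℕ, 1 ≤ n → J ^ n < I ^ n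

section Aux

variable {R : Type*} [CommRing R] [IsDomain R]

open FractionalIdeal

/-- Cancellation of multiplication by a nonzero principal fractional ideal (≤ version). -/
lemma spanSingleton_mul_le_spanSingleton_mul {x : FractionRing R} (hx : x ≠ 0)
    {X Y : FractionalIdeal (nonZeroDivisors R) (FractionRing R)} :
    spanSingleton (nonZeroDivisors R) x * X ≤ spanSingleton (nonZeroDivisors R) x * Y ↔
      X ≤ Y := by
  constructor
  · intro h
    have h' := mul_le_mul_right h (spanSingleton (nonZeroDivisors R) x⁻¹)
    rwa [← mul_assoc, ← mul_assoc, spanSingleton_mul_spanSingleton,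
      inv_mul_cancel₀ hx, spanSingleton_one, one_mul, one_mul] at h'
  · intro h
    exact mul_le_mul_right h _

lemma spanSingleton_mul_lt_spanSingleton_mul {x : FractionRing R} (hx : x ≠ 0)
    {X Y : FractionalIdeal (nonZeroDivisors R) (FractionRing R)} :
    spanSingleton (nonZeroDivisors R) x * X < spanSingleton (nonZeroDivisors R) x * Y ↔
      X < Y := by
  rw [lt_iff_le_not_ge, lt_iff_le_not_ge, spanSingleton_mul_le_spanSingleton_mul hx,
    spanSingleton_mul_le_spanSingleton_mul hx]

lemma FractionalIdeal.lt_iff_coe_lt_coe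
    {X Y : FractionalIdeal (nonZeroDivisors R) (FractionRing R)} :
    X < Y ↔ (X : Submodule R (FractionRing R)) < (Y : Submodule R (FractionRing R)) := by
  rw [lt_iff_le_not_ge, lt_iff_le_not_ge, coe_le_coe, coe_le_coe]

lemma Ideal.lt_iff_coeIdeal_lt {X Y : Ideal R} :
    X < Y ↔ (X : FractionalIdeal (nonZeroDivisors R) (FractionRing R)) <
      (Y : FractionalIdeal (nonZeroDivisors R) (FractionRing R)) := by
  rw [lt_iff_le_not_ge, lt_iff_le_not_ge,
    coeIdeal_le_coeIdeal (FractionRing R), coeIdeal_le_coeIdeal (FractionRing R)]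

end Aux

/-- **Proposition 2.13(1).** Let `R` be a domain, `I` a nonzero ideal of `R`,
`T = (I : I)` (as a fractional ideal, `T = I / I`), and assume `I` is strongly stable,
i.e. `I = aT` for some `a ∈ I`.  Then `I` is a big ideal if and only if for every
`R`-submodule `W` of `T` with `W ⊊ T` one has `Wⁿ ⊊ T` for every `n ≥ 2`. -/
theorem isBig_iff_of_stronglyStable (R : Type*) [CommRing R] [IsDomain R]
    (I : Ideal R) (hI : I ≠ ⊥) (a : R) (ha : a ∈ I)
    (hss : FractionalIdeal.spanSingleton (nonZeroDivisors R)
          (algebraMap R (FractionRing R) a) *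
        ((I : FractionalIdeal (nonZeroDivisors R) (FractionRing R)) / I)
      = (I : FractionalIdeal (nonZeroDivisors R) (FractionRing R))) :
    I.IsBig ↔ ∀ W : Submodule R (FractionRing R),
      W < (((I : FractionalIdeal (nonZeroDivisors R) (FractionRing R)) / I :
          FractionalIdeal (nonZeroDivisors R) (FractionRing R)) :
        Submodule R (FractionRing R)) →
      ∀ n : ℕ, 2 ≤ n →
        W ^ n < (((I : FractionalIdeal (nonZeroDivisors R) (FractionRing R)) / I :
            FractionalIdeal (nonZeroDivisors R) (FractionRing R)) :
          Submodule R (FractionRing R)) := by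
  classical
  set K := FractionRing R
  set IF : FractionalIdeal (nonZeroDivisors R) K := (I : FractionalIdeal (nonZeroDivisors R) K)
    with hIF
  set T : FractionalIdeal (nonZeroDivisors R) K := IF / IF with hT
  set α : K := algebraMap R K a with hα
  have hI0 : IF ≠ 0 := by
    rw [hIF, Ne, FractionalIdeal.coeIdeal_eq_zero]
    exact hI
  have hα0 : α ≠ 0 := by
    intro h
    apply hI0
    rw [← hss, h, FractionalIdeal.spanSingleton_zero, zero_mul]
  -- basic properties of T
  have hTI : T * IF ≤ IF := (FractionalIdeal.le_div_iff_mul_le hI0).mp le_rfl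
  have hone_le_T : 1 ≤ T := by
    rw [hT, FractionalIdeal.le_div_iff_mul_le hI0, one_mul]
  have hTT : T * T ≤ T := by
    rw [hT, FractionalIdeal.le_div_iff_mul_le hI0]
    calc IF / IF * (IF / IF) * IF = IF / IF * (IF / IF * IF) := by ring
    _ ≤ IF / IF * IF := mul_le_mul_right hTI _
    _ ≤ IF := hTI
  have hTpow : ∀ n : ℕ, 1 ≤ n → T ^ n = T := by
    intro n hn
    induction n with
    | zero => omega
    | succ m ih =>
      rcases Nat.eq_or_lt_of_le hn with h1 | h1
      · rw [← h1, pow_one]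
      · have hm : 1 ≤ m := by omega
        rw [pow_succ, ih hm]
        refine le_antisymm hTT ?_
        calc T = T * 1 := (mul_one T).symm
        _ ≤ T * T := mul_le_mul_right hone_le_T _
  constructor
  · -- big ⇒ condition on submodules of T
    intro hbig W hW n hn
    -- W is a fractional ideal
    have hWfrac : IsFractional (nonZeroDivisors R) W :=
      FractionalIdeal.isFractional_of_le (J := T) hW.le
    set WF : FractionalIdeal (nonZeroDivisors R) K := ⟨W, hWfrac⟩ with hWF
    have hWFcoe : (WF : Submodule R K) = W := rfl
    have hWT : WF < T := by
      rw [FractionalIdeal.lt_iff_coe_lt_coe, hWFcoe]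
      exact hW
    -- J := a • W is an ideal of R
    have hle1 : FractionalIdeal.spanSingleton (nonZeroDivisors R) α * WF ≤ 1 := by
      calc FractionalIdeal.spanSingleton (nonZeroDivisors R) α * WF
          ≤ FractionalIdeal.spanSingleton (nonZeroDivisors R) α * T :=
            mul_le_mul_right hWT.le _
      _ = IF := hss
      _ ≤ 1 := by
          rw [hIF]
          exact FractionalIdeal.le_one_iff_exists_coeIdeal.mpr ⟨I, rfl⟩
    obtain ⟨J, hJ⟩ := FractionalIdeal.le_one_iff_exists_coeIdeal.mp hle1
    have hJlt : J < I := by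
      rw [Ideal.lt_iff_coeIdeal_lt, hJ, ← hIF, ← hss]
      exact (spanSingleton_mul_lt_spanSingleton_mul hα0).mpr hWT
    have := hbig J hJlt n (by omega)
    rw [Ideal.lt_iff_coeIdeal_lt, FractionalIdeal.coeIdeal_pow, FractionalIdeal.coeIdeal_pow,
      hJ, ← hIF, ← hss, mul_pow, mul_pow, FractionalIdeal.spanSingleton_pow,
      spanSingleton_mul_lt_spanSingleton_mul (pow_ne_zero n hα0), hTpow n (by omega)] at this
    have h' : WF ^ n < T := this
    rw [FractionalIdeal.lt_iff_coe_lt_coe, FractionalIdeal.coe_pow, hWFcoe] at h'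
    exact h'
  · -- condition on submodules of T ⇒ big
    intro hcond J hJ n hn
    rcases Nat.eq_or_lt_of_le hn with h1 | h1
    · rw [← h1, pow_one, pow_one]
      exact hJ
    · have hn2 : 2 ≤ n := h1
      set WF : FractionalIdeal (nonZeroDivisors R) K :=
        FractionalIdeal.spanSingleton (nonZeroDivisors R) α⁻¹ * (J : FractionalIdeal (nonZeroDivisors R) K)
        with hWFdef
      have hαW : FractionalIdeal.spanSingleton (nonZeroDivisors R) α * WF
          = (J : FractionalIdeal (nonZeroDivisors R) K) := by
        rw [hWFdef, ← mul_assoc, FractionalIdeal.spanSingleton_mul_spanSingleton,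
          mul_inv_cancel₀ hα0, FractionalIdeal.spanSingleton_one, one_mul]
      have hWT : WF < T := by
        rw [← spanSingleton_mul_lt_spanSingleton_mul hα0, hαW, hss, hIF]
        exact Ideal.lt_iff_coeIdeal_lt.mp hJ
      have h := hcond (WF : Submodule R K)
        (FractionalIdeal.lt_iff_coe_lt_coe.mp hWT) n hn2
      rw [← FractionalIdeal.coe_pow, ← FractionalIdeal.lt_iff_coe_lt_coe] at h
      -- back to ideals
      rw [Ideal.lt_iff_coeIdeal_lt, FractionalIdeal.coeIdeal_pow, FractionalIdeal.coeIdeal_pow]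
      calc ((J : FractionalIdeal (nonZeroDivisors R) K)) ^ n
          = FractionalIdeal.spanSingleton (nonZeroDivisors R) (α ^ n) * WF ^ n := by
            rw [← hαW, mul_pow, FractionalIdeal.spanSingleton_pow]
      _ < FractionalIdeal.spanSingleton (nonZeroDivisors R) (α ^ n) * T :=
            (spanSingleton_mul_lt_spanSingleton_mul (pow_ne_zero n hα0)).mpr h
      _ = ((I : FractionalIdeal (nonZeroDivisors R) K)) ^ n := by
            rw [← hTpow n (by omega), ← FractionalIdeal.spanSingleton_pow, ← mul_pow, hss, hIF]
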